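/- The power-sum syndromes determine the transposition positions exactly: if σ' is obtained from σ ∈ S_n by swapping positions a < b (with σ_a ≠ σ_b), then a + b = δ_2/δ_1 and a² + ab + b² = δ_3/δ_1, where δ_k = Σ_i i^k·σ'_i − Σ_i i^k·σ_i; consequently the pair (a,b) is uniquely recoverable from (δ_1, δ_2, δ_3). -/
import Mathlib


/-- The power-sum syndromes determine the transposition positions exactly: with
`δ_k = ∑ i^k σ'_i − ∑ i^k σ_i` one has `δ_1 ≠ 0`, `a + b = δ_2/δ_1` and
`a² + ab + b² = δ_3/δ_1`; consequently the pair `(a, b)` is uniquely recoverable. -/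
theorem transposition_positions_recoverable (n : ℕ) (σ σ' : ℕ → ℕ)
    (hσ : Set.BijOn σ (Set.Icc 1 n) (Set.Icc 1 n))
    (a b : ℕ) (ha : 1 ≤ a) (hab : a < b) (hb : b ≤ n) (hne : σ a ≠ σ b)
    (hσ' : ∀ i, σ' i = if i = a then σ b else if i = b then σ a else σ i)
    (δ₁ δ₂ δ₃ : ℚ)
    (hδ₁ : δ₁ = (∑ i ∈ Finset.Icc 1 n, (i : ℚ) * σ' i) - ∑ i ∈ Finset.Icc 1 n, (i : ℚ) * σ i)
    (hδ₂ : δ₂ = (∑ i ∈ Finset.Icc 1 n, (i : ℚ) ^ 2 * σ' i)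
        - ∑ i ∈ Finset.Icc 1 n, (i : ℚ) ^ 2 * σ i)
    (hδ₃ : δ₃ = (∑ i ∈ Finset.Icc 1 n, (i : ℚ) ^ 3 * σ' i)
        - ∑ i ∈ Finset.Icc 1 n, (i : ℚ) ^ 3 * σ i) :
    δ₁ ≠ 0 ∧ (a : ℚ) + b = δ₂ / δ₁ ∧ (a : ℚ) ^ 2 + a * b + (b : ℚ) ^ 2 = δ₃ / δ₁ ∧
      ∀ a' b' : ℕ, a' < b' → (a' : ℚ) + b' = δ₂ / δ₁ →
        (a' : ℚ) ^ 2 + a' * b' + (b' : ℚ) ^ 2 = δ₃ / δ₁ → a' = a ∧ b' = b := by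
  have hsa : σ' a = σ b := by simp [hσ']
  have hsb : σ' b = σ a := by simp [hσ', hab.ne']
  have hsub : ({a, b} : Finset ℕ) ⊆ Finset.Icc 1 n := by
    intro i hi
    simp only [Finset.mem_insert, Finset.mem_singleton] at hi
    rcases hi with rfl | rfl
    · exact Finset.mem_Icc.2 ⟨ha, le_trans hab.le hb⟩
    · exact Finset.mem_Icc.2 ⟨le_trans ha hab.le, hb⟩
  have key : ∀ f : ℕ → ℚ,
      (∑ i ∈ Finset.Icc 1 n, f i * σ' i) - ∑ i ∈ Finset.Icc 1 n, f i * σ i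
        = (f b - f a) * ((σ a : ℚ) - σ b) := by
    intro f
    rw [← Finset.sum_sub_distrib]
    rw [← Finset.sum_subset hsub (by
      intro i hi hni
      simp only [Finset.mem_insert, Finset.mem_singleton, not_or] at hni
      rw [hσ' i, if_neg hni.1, if_neg hni.2, sub_self])]
    rw [Finset.sum_pair hab.ne, hsa, hsb]
    ring
  have h1 : δ₁ = ((b : ℚ) - a) * ((σ a : ℚ) - σ b) := by
    rw [hδ₁, key (fun i => (i : ℚ))]
  have h2 : δ₂ = ((b : ℚ) ^ 2 - (a : ℚ) ^ 2) * ((σ a : ℚ) - σ b) := by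
    rw [hδ₂, key (fun i => (i : ℚ) ^ 2)]
  have h3 : δ₃ = ((b : ℚ) ^ 3 - (a : ℚ) ^ 3) * ((σ a : ℚ) - σ b) := by
    rw [hδ₃, key (fun i => (i : ℚ) ^ 3)]
  have hba : (b : ℚ) - a ≠ 0 := by
    have : (a : ℚ) < b := by exact_mod_cast hab
    linarith [this]
  have hc : (σ a : ℚ) - σ b ≠ 0 := by
    have : (σ a : ℚ) ≠ σ b := by exact_mod_cast hne
    exact sub_ne_zero.2 this
  have hδ1ne : δ₁ ≠ 0 := by rw [h1]; exact mul_ne_zero hba hc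
  have hsum : (a : ℚ) + b = δ₂ / δ₁ := by
    rw [eq_div_iff hδ1ne, h1, h2]; ring
  have hsq : (a : ℚ) ^ 2 + a * b + (b : ℚ) ^ 2 = δ₃ / δ₁ := by
    rw [eq_div_iff hδ1ne, h1, h3]; ring
  refine ⟨hδ1ne, hsum, hsq, ?_⟩
  intro a' b' hab' hs' hp'
  rw [← hsum] at hs'
  rw [← hsq] at hp'
  have hprod : (a' : ℚ) * b' = (a : ℚ) * b := by
    linear_combination ((a' : ℚ) + b' + a + b) * hs' - hp'
  have ha'q : (a' : ℚ) < b' := by exact_mod_cast hab'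
  have haq : (a : ℚ) < b := by exact_mod_cast hab
  have hroot : ((a' : ℚ) - a) * ((a' : ℚ) - b) = 0 := by
    linear_combination (a' : ℚ) * hs' - hprod
  have ha'a : (a' : ℚ) = a := by
    rcases mul_eq_zero.1 hroot with h | h
    · linarith
    · exfalso
      have h4 : (a' : ℚ) = b := by linarith
      have h5 : (b' : ℚ) = a := by linarith
      linarith
  have hb'b : (b' : ℚ) = b := by linarith [hs', ha'a]
  constructor
  · exact_mod_cast ha'a
  · exact_mod_cast hb'b
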